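/- If χ²_{(n)} is a chi-squared random variable with n degrees of freedom, then for every ε with 0 ≤ ε < 1/2, P{χ²_{(n)} ≥ n(1 + ε)} ≤ exp(−3n ε² / 16). -/

import Mathlib

/-!
STATEMENT 13 (Johnstone–Lu, chi-squared upper-tail bound): For `0 ≤ ε < 1/2`,
`P{χ²_{(n)} ≥ n(1 + ε)} ≤ exp(−3n ε²/16)`.
-/

open MeasureTheory ProbabilityTheory

noncomputable section

namespace ChiSqAux

open Real
open scoped ENNReal NNReal

lemma log32 : Real.log (3/2) ≤ 13/32 := by
  rw [Real.log_le_iff_le_exp (by norm_num)]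
  calc (3/2 : ℝ) ≤ ∑ i ∈ Finset.range 5, (13/32:ℝ) ^ i / i.factorial := by
        simp [Finset.sum_range_succ, Nat.factorial]; norm_num
    _ ≤ Real.exp (13/32) := Real.sum_le_exp_of_nonneg (by norm_num) 5

lemma deriv_g (x : ℝ) (hx : -1 < x) :
    HasDerivAt (fun y : ℝ => y - Real.log (1+y) - 3/8*y^2) (1 - (1+x)⁻¹ - 3/4*x) x := by
  have h1 : HasDerivAt (fun y : ℝ => 1 + y) 1 x := (hasDerivAt_id x).const_add 1
  have h2 : HasDerivAt (fun y : ℝ => Real.log (1+y)) ((1+x)⁻¹ * 1) x :=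
    (h1.log (by linarith)).congr_deriv (by ring)
  have h3 : HasDerivAt (fun y : ℝ => 3/8*y^2) (3/8*(2*x)) x := by
    simpa using ((hasDerivAt_pow 2 x).const_mul (3/8:ℝ))
  have := ((hasDerivAt_id x).sub h2).sub h3
  convert this using 1
  all_goals first | rfl | ring

lemma log_ineq {ε : ℝ} (h0 : 0 ≤ ε) (h1 : ε ≤ 1/2) :
    3*ε^2/8 ≤ ε - Real.log (1+ε) := by
  set g : ℝ → ℝ := fun y => y - Real.log (1+y) - 3/8*y^2 with hg
  have hcont : ContinuousOn g (Set.Icc (0:ℝ) (1/2)) := by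
    apply ContinuousOn.sub
    apply ContinuousOn.sub continuousOn_id
    · exact (Real.continuousOn_log.comp (by fun_prop) (fun x hx => by
        simp only [Set.mem_Icc] at hx; intro h; simp at h; linarith [hx.1])).congr
        (fun x hx => rfl)
    · fun_prop
  have key : 0 ≤ g ε := by
    rcases le_or_gt ε (1/3) with hc | hc
    · have hmono : MonotoneOn g (Set.Icc (0:ℝ) (1/3)) := by
        apply monotoneOn_of_deriv_nonneg (convex_Icc _ _)
        · exact hcont.mono (Set.Icc_subset_Icc le_rfl (by norm_num))
        · intro x hx
          rw [interior_Icc] at hx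
          exact (deriv_g x (by linarith [hx.1])).differentiableAt.differentiableWithinAt
        · intro x hx
          rw [interior_Icc] at hx
          rw [(deriv_g x (by linarith [hx.1])).deriv]
          have h1x : (0:ℝ) < 1 + x := by linarith [hx.1]
          have e : 1 - (1+x)⁻¹ - 3/4*x = x*(1-3*x)/(4*(1+x)) := by
            field_simp; ring
          rw [e]
          exact div_nonneg (mul_nonneg hx.1.le (by linarith [hx.2])) (by linarith)
      have := hmono (Set.mem_Icc.2 ⟨le_rfl, by norm_num⟩) (Set.mem_Icc.2 ⟨h0, hc⟩) h0
      simpa [hg] using this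
    · have hanti : AntitoneOn g (Set.Icc (1/3:ℝ) (1/2)) := by
        apply antitoneOn_of_deriv_nonpos (convex_Icc _ _)
        · exact hcont.mono (Set.Icc_subset_Icc (by norm_num) le_rfl)
        · intro x hx
          rw [interior_Icc] at hx
          exact (deriv_g x (by linarith [hx.1])).differentiableAt.differentiableWithinAt
        · intro x hx
          rw [interior_Icc] at hx
          rw [(deriv_g x (by linarith [hx.1])).deriv]
          have h1x : (0:ℝ) < 1 + x := by linarith [hx.1]
          have e : 1 - (1+x)⁻¹ - 3/4*x = x*(1-3*x)/(4*(1+x)) := by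
            field_simp; ring
          rw [e]
          exact div_nonpos_of_nonpos_of_nonneg
            (mul_nonpos_of_nonneg_of_nonpos (by linarith [hx.1]) (by linarith [hx.1]))
            (by linarith)
      have hge : g ε ≥ g (1/2) :=
        hanti (Set.mem_Icc.2 ⟨hc.le, h1⟩) (Set.mem_Icc.2 ⟨by norm_num, le_rfl⟩) h1
      have : 0 ≤ g (1/2) := by
        have : (1:ℝ) + 1/2 = 3/2 := by norm_num
        simp only [hg, this]
        nlinarith [log32]
      exact le_trans this hge
  simp only [hg] at key
  linarith

lemma gauss_pdf_mul (t : ℝ) (x : ℝ) :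
    gaussianPDFReal 0 1 x * Real.exp (t * x^2)
      = (Real.sqrt (2*π))⁻¹ * Real.exp (-(1/2 - t) * x^2) := by
  simp only [gaussianPDFReal, NNReal.coe_one, mul_one, sub_zero]
  rw [mul_assoc, ← Real.exp_add]
  congr 1
  ring

lemma gauss_mgf_integrable {t : ℝ} (ht : t < 1/2) :
    Integrable (fun x => Real.exp (t * x^2)) (gaussianReal 0 1) := by
  rw [gaussianReal_of_var_ne_zero 0 one_ne_zero, gaussianPDF_def]
  have hmeas : Measurable (fun x => (gaussianPDFReal 0 1 x).toNNReal) :=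
    (measurable_gaussianPDFReal 0 1).real_toNNReal
  rw [show (fun x => ENNReal.ofReal (gaussianPDFReal 0 1 x))
      = (fun x => ((gaussianPDFReal 0 1 x).toNNReal : ℝ≥0∞)) from rfl,
    integrable_withDensity_iff_integrable_smul hmeas]
  have : (fun x => ((gaussianPDFReal 0 1 x).toNNReal : ℝ≥0) • Real.exp (t * x^2))
      = fun x => (Real.sqrt (2*π))⁻¹ * Real.exp (-(1/2 - t) * x^2) := by
    funext x
    rw [NNReal.smul_def, smul_eq_mul, Real.coe_toNNReal _ (gaussianPDFReal_nonneg 0 1 x),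
      gauss_pdf_mul]
  rw [this]
  exact (integrable_exp_neg_mul_sq (by linarith)).const_mul _

lemma gauss_mgf {t : ℝ} (ht : t < 1/2) :
    ∫ x, Real.exp (t * x^2) ∂(gaussianReal 0 1) = (Real.sqrt (1 - 2*t))⁻¹ := by
  rw [gaussianReal_of_var_ne_zero 0 one_ne_zero, gaussianPDF_def]
  have hmeas : Measurable (fun x => (gaussianPDFReal 0 1 x).toNNReal) :=
    (measurable_gaussianPDFReal 0 1).real_toNNReal
  rw [show (fun x => ENNReal.ofReal (gaussianPDFReal 0 1 x))
      = (fun x => ((gaussianPDFReal 0 1 x).toNNReal : ℝ≥0∞)) from rfl,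
    integral_withDensity_eq_integral_smul hmeas]
  have : (fun x => ((gaussianPDFReal 0 1 x).toNNReal : ℝ≥0) • Real.exp (t * x^2))
      = fun x => (Real.sqrt (2*π))⁻¹ * Real.exp (-(1/2 - t) * x^2) := by
    funext x
    rw [NNReal.smul_def, smul_eq_mul, Real.coe_toNNReal _ (gaussianPDFReal_nonneg 0 1 x),
      gauss_pdf_mul]
  rw [this, integral_const_mul, integral_gaussian]
  have h2 : (0:ℝ) < 1 - 2*t := by linarith
  rw [← Real.sqrt_inv, ← Real.sqrt_mul (by positivity), ← Real.sqrt_inv]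
  congr 1
  have h3 : (1/2 - t) ≠ 0 := by linarith
  field_simp

lemma pi_exp_integrable (n : ℕ) {f : ℝ → ℝ} (hf : Integrable f (gaussianReal 0 1)) :
    Integrable (fun x : Fin n → ℝ => ∏ i, f (x i))
      (Measure.pi fun _ : Fin n => gaussianReal 0 1) := by
  letI : MeasureSpace ℝ := ⟨gaussianReal 0 1⟩
  haveI : SigmaFinite (volume : Measure ℝ) :=
    inferInstanceAs (SigmaFinite (gaussianReal 0 1))
  exact Integrable.fintype_prod (fun _ => hf)

lemma pi_exp_integral (n : ℕ) (f : ℝ → ℝ) :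
    ∫ x : Fin n → ℝ, ∏ i, f (x i) ∂(Measure.pi fun _ : Fin n => gaussianReal 0 1)
      = (∫ y, f y ∂(gaussianReal 0 1)) ^ n := by
  letI : MeasureSpace ℝ := ⟨gaussianReal 0 1⟩
  haveI : SigmaFinite (volume : Measure ℝ) :=
    inferInstanceAs (SigmaFinite (gaussianReal 0 1))
  simpa using MeasureTheory.integral_fintype_prod_eq_pow (ι := Fin n) f (μ := gaussianReal 0 1)

end ChiSqAux

/-- The chi-squared distribution with `n` degrees of freedom: the law of
`z₁² + ⋯ + z_n²` for i.i.d. standard normal `z_i`. -/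
def chiSqMeasure (n : ℕ) : Measure ℝ :=
  Measure.map (fun x : Fin n → ℝ => ∑ i, (x i) ^ 2)
    (Measure.pi fun _ : Fin n => gaussianReal 0 1)

theorem chiSq_upper_tail (n : ℕ) (ε : ℝ) (hε0 : 0 ≤ ε) (hε1 : ε < 1 / 2) :
    chiSqMeasure n {x : ℝ | (n : ℝ) * (1 + ε) ≤ x} ≤
      ENNReal.ofReal (Real.exp (-3 * (n : ℝ) * ε ^ 2 / 16)) := by
  classical
  have h1ε : (0:ℝ) < 1 + ε := by linarith
  set t : ℝ := ε / (2 * (1 + ε)) with hts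
  have ht0 : 0 ≤ t := div_nonneg hε0 (by linarith)
  have ht2 : t < 1/2 := by
    rw [div_lt_iff₀ (by linarith)]
    linarith
  set μp : Measure (Fin n → ℝ) := Measure.pi fun _ : Fin n => gaussianReal 0 1 with hμp
  set X : (Fin n → ℝ) → ℝ := fun x => ∑ i, (x i) ^ 2 with hX
  have hXm : Measurable X := Finset.measurable_sum _ fun i _ =>
    (measurable_pi_apply i).pow_const 2
  have hmap : chiSqMeasure n {x : ℝ | (n : ℝ) * (1 + ε) ≤ x}
      = μp {ω | (n : ℝ) * (1 + ε) ≤ X ω} := by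
    have hIci : {x : ℝ | (n:ℝ)*(1+ε) ≤ x} = Set.Ici ((n:ℝ)*(1+ε)) := rfl
    rw [chiSqMeasure, hIci, Measure.map_apply hXm measurableSet_Ici]
    rfl
  have hprob : IsProbabilityMeasure μp := by infer_instance
  -- integrability of exp (t * X)
  have hexp : ∀ ω, Real.exp (t * X ω) = ∏ i, Real.exp (t * (ω i)^2) := by
    intro ω
    rw [hX, Finset.mul_sum, Real.exp_sum]
  have hint : Integrable (fun ω => Real.exp (t * X ω)) μp := by
    simp only [hexp]
    exact ChiSqAux.pi_exp_integrable n (ChiSqAux.gauss_mgf_integrable ht2)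
  -- mgf computation
  have hmgf : mgf X μp t = ((Real.sqrt (1 - 2*t))⁻¹) ^ n := by
    rw [mgf]
    calc ∫ ω, Real.exp (t * X ω) ∂μp
        = ∫ ω : Fin n → ℝ, ∏ i, Real.exp (t * (ω i)^2) ∂μp := by
          congr 1; funext ω; exact hexp ω
      _ = (∫ y, Real.exp (t * y^2) ∂(gaussianReal 0 1)) ^ n := by
          rw [hμp]; exact ChiSqAux.pi_exp_integral n (fun y => Real.exp (t * y^2))
      _ = ((Real.sqrt (1 - 2*t))⁻¹) ^ n := by rw [ChiSqAux.gauss_mgf ht2]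
  have hch := measure_ge_le_exp_mul_mgf (μ := μp) (X := X) ((n:ℝ) * (1 + ε)) ht0 hint
  rw [hmgf] at hch
  -- numeric bound
  have h12t : 1 - 2*t = (1+ε)⁻¹ := by
    rw [hts]; field_simp; ring
  have hnum : Real.exp (-t * ((n:ℝ) * (1 + ε))) * ((Real.sqrt (1 - 2*t))⁻¹) ^ n
      ≤ Real.exp (-3 * (n : ℝ) * ε ^ 2 / 16) := by
    have hs : (Real.sqrt (1 - 2*t))⁻¹ = Real.exp (Real.log (1+ε) / 2) := by
      rw [h12t, Real.sqrt_inv, inv_inv, ← Real.exp_log (Real.sqrt_pos.2 h1ε),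
        Real.log_sqrt h1ε.le]
    rw [hs, ← Real.exp_nat_mul, ← Real.exp_add, Real.exp_le_exp]
    have h5 : -t * ((n:ℝ)*(1+ε)) = -(n:ℝ)*ε/2 := by
      rw [hts]; field_simp
    have hli := ChiSqAux.log_ineq hε0 hε1.le
    have hn : (0:ℝ) ≤ n := Nat.cast_nonneg n
    have h6 := mul_le_mul_of_nonneg_left hli hn
    nlinarith [h5, h6]
  refine hmap ▸ ?_
  have := ENNReal.ofReal_le_ofReal (le_trans hch hnum)
  rwa [ofReal_measureReal (measure_ne_top _ _)] at this

end
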